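/- Let ψ ∈ ℂ^m⊗ℂ^n and φ ∈ ℂ^u⊗ℂ^v be unit vectors with Schmidt decompositions ψ = Σ_i λ_i (a_i ⊗ b_i) and φ = Σ_j μ_j (c_j ⊗ d_j), where (a_i), (b_i), (c_j), (d_j) are orthonormal families and λ_i, μ_j ≥ 0 with Σ_i λ_i² = Σ_j μ_j² = 1. Set ρ = ψψ† ⊗ φφ† and σ = Σ_{i,j} λ_i² μ_j² (b_i⊗c_j)(b_i⊗c_j)†. Then for every rank-one von Neumann measurement {Π_h = u_h u_h†} on ℂ^n⊗ℂ^u, tr( ρ · Π^{BC}(ρ) ) = Σ_h (⟨u_h, σ u_h⟩)². -/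

import Mathlib

open scoped Matrix Kronecker BigOperators ComplexOrder
open Matrix

/-- The positive-semidefinite square root of a PSD matrix (0 if not PSD). -/
noncomputable def psdSqrt {N : Type*} [Fintype N] [DecidableEq N] (A : Matrix N N ℂ) :
    Matrix N N ℂ :=
  open scoped Classical in
  if h : A.PosSemidef then (h.1.eigenvectorUnitary : Matrix N N ℂ) *
    diagonal ((↑) ∘ (√·) ∘ h.1.eigenvalues) * (star (h.1.eigenvectorUnitary : Matrix N N ℂ))
    else 0

/-- Squared Frobenius (Hilbert–Schmidt) norm: `‖X‖² = tr (Xᴴ X)`. -/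
noncomputable def hsNormSq {N : Type*} [Fintype N] (X : Matrix N N ℂ) : ℝ :=
  (Matrix.trace (Xᴴ * X)).re

/-- A density matrix: positive semidefinite with unit trace. -/
def IsDensity {N : Type*} [Fintype N] [DecidableEq N] (ρ : Matrix N N ℂ) : Prop :=
  ρ.PosSemidef ∧ ρ.trace = 1

/-- Standard inner product on `ℂ^N`. -/
noncomputable def cInner {N : Type*} [Fintype N] (x y : N → ℂ) : ℂ :=
  ∑ i, star (x i) * y i

/-- Outer product `ψ ψ†`. -/
noncomputable def outer {N : Type*} (ψ : N → ℂ) : Matrix N N ℂ :=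
  Matrix.vecMulVec ψ (star ψ)

/-- The family of unit vectors of a rank-one von Neumann measurement: an orthonormal basis,
indexed by the dimension. -/
def IsVNM {N : Type*} [Fintype N] [DecidableEq N] (u : N → N → ℂ) : Prop :=
  ∀ a b, cInner (u a) (u b) = if a = b then (1 : ℂ) else 0

/-- The rank-one projection `Π_h = u_h u_h†` of a measurement. -/
noncomputable def projOf {N : Type*} (u : N → N → ℂ) (h : N) : Matrix N N ℂ :=
  outer (u h)

/-- The measurement `{u_h u_h†}` fixes `σ`: `Σ_h Π_h σ Π_h = σ`. -/
def FixesVNM {N : Type*} [Fintype N] (u : N → N → ℂ) (σ : Matrix N N ℂ) : Prop :=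
  ∑ h, projOf u h * σ * projOf u h = σ

/-- Reduced state of the second factor: `(ρ_B)_{j j'} = Σ_i ρ_{(i,j),(i,j')}`. -/
noncomputable def redB {m n : ℕ} (ρ : Matrix (Fin m × Fin n) (Fin m × Fin n) ℂ) :
    Matrix (Fin n) (Fin n) ℂ :=
  Matrix.of fun j j' => ∑ i, ρ (i, j) (i, j')

/-- Reduced state of the first factor: `(ρ_C)_{k k'} = Σ_l ρ_{(k,l),(k',l)}`. -/
noncomputable def redC {u v : ℕ} (ρ : Matrix (Fin u × Fin v) (Fin u × Fin v) ℂ) :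
    Matrix (Fin u) (Fin u) ℂ :=
  Matrix.of fun k k' => ∑ l, ρ (k, l) (k', l)

/-- `I_m ⊗ P ⊗ I_v` acting on the middle two factors. -/
noncomputable def ampMid (m v : ℕ) {n u : ℕ} (P : Matrix (Fin n × Fin u) (Fin n × Fin u) ℂ) :
    Matrix ((Fin m × Fin n) × Fin u × Fin v) ((Fin m × Fin n) × Fin u × Fin v) ℂ :=
  Matrix.of fun p q =>
    (if p.1.1 = q.1.1 then (1 : ℂ) else 0) * P (p.1.2, p.2.1) (q.1.2, q.2.1) *
      (if p.2.2 = q.2.2 then (1 : ℂ) else 0)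

/-- The map `Π^{BC}(X) = Σ_h (I_m ⊗ Π_h ⊗ I_v) X (I_m ⊗ Π_h ⊗ I_v)`. -/
noncomputable def pinchBC {m n u v : ℕ} (w : (Fin n × Fin u) → (Fin n × Fin u) → ℂ)
    (X : Matrix ((Fin m × Fin n) × Fin u × Fin v) ((Fin m × Fin n) × Fin u × Fin v) ℂ) :
    Matrix ((Fin m × Fin n) × Fin u × Fin v) ((Fin m × Fin n) × Fin u × Fin v) ℂ :=
  ∑ h, ampMid m v (projOf w h) * X * ampMid m v (projOf w h)

/-- The measurement-induced nonbilocality `N_H^b(ρ_AB ⊗ ρ_CD)`. -/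
noncomputable def NHb {m n u v : ℕ}
    (ρAB : Matrix (Fin m × Fin n) (Fin m × Fin n) ℂ)
    (ρCD : Matrix (Fin u × Fin v) (Fin u × Fin v) ℂ) : ℝ :=
  sSup { r : ℝ | ∃ w : (Fin n × Fin u) → (Fin n × Fin u) → ℂ,
    IsVNM w ∧ FixesVNM w (redB ρAB ⊗ₖ redC ρCD) ∧
    r = hsNormSq (psdSqrt (ρAB ⊗ₖ ρCD) - pinchBC w (psdSqrt (ρAB ⊗ₖ ρCD))) }


section Aux

lemma outer_kron' {α β : Type*} (x : α → ℂ) (y : β → ℂ) :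
    outer x ⊗ₖ outer y = outer (fun p : α × β => x p.1 * y p.2) := by
  ext ⟨p, r⟩ ⟨q, s⟩
  simp [outer, Matrix.kroneckerMap_apply, Matrix.vecMulVec_apply]
  ring

lemma sandwich' {N : Type*} [Fintype N] (Ψ : N → ℂ) (M : Matrix N N ℂ) :
    outer Ψ * (M * outer Ψ) = (Matrix.trace (outer Ψ * M)) • outer Ψ := by
  ext p q
  simp [Matrix.mul_apply, outer, Matrix.vecMulVec_apply, Matrix.trace, Matrix.diag,
    Finset.mul_sum, Finset.sum_mul]
  rw [Finset.sum_comm]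
  refine Finset.sum_congr rfl fun r _ => Finset.sum_congr rfl fun s _ => by ring

lemma trace_sq' {N : Type*} [Fintype N] (Ψ : N → ℂ) (M : Matrix N N ℂ) :
    Matrix.trace (outer Ψ * (M * outer Ψ * M)) = (Matrix.trace (outer Ψ * M)) ^ 2 := by
  have : M * outer Ψ * M = (M * outer Ψ) * M := rfl
  rw [this, ← mul_assoc, ← mul_assoc, mul_assoc (outer Ψ) M (outer Ψ), sandwich',
    Matrix.smul_mul, Matrix.trace_smul, smul_eq_mul, sq]

lemma regroup' {M N U V N' U' : Type*} [Fintype M] [Fintype N] [Fintype U] [Fintype V]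
    [Fintype N'] [Fintype U'] (f : M → N → U → V → N' → U' → ℂ) :
    ∑ pm : M, ∑ pn : N, ∑ pu : U, ∑ pv : V, ∑ qn : N', ∑ qu : U', f pm pn pu pv qn qu
    = ∑ qn : N', ∑ qu : U', ∑ pn : N, ∑ pu : U, ∑ pm : M, ∑ pv : V, f pm pn pu pv qn qu := by
  rw [show (∑ pm : M, ∑ pn : N, ∑ pu : U, ∑ pv : V, ∑ qn : N', ∑ qu : U', f pm pn pu pv qn qu)
      = ∑ z : M × N × U × V × N' × U', f z.1 z.2.1 z.2.2.1 z.2.2.2.1 z.2.2.2.2.1 z.2.2.2.2.2 by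
    simp [Fintype.sum_prod_type]]
  rw [show (∑ qn : N', ∑ qu : U', ∑ pn : N, ∑ pu : U, ∑ pm : M, ∑ pv : V, f pm pn pu pv qn qu)
      = ∑ z : N' × U' × N × U × M × V,
          f z.2.2.2.2.1 z.2.2.1 z.2.2.2.1 z.2.2.2.2.2 z.1 z.2.1 by
    simp [Fintype.sum_prod_type]]
  exact Fintype.sum_equiv
    ⟨fun w => (w.2.2.2.2.1, w.2.2.2.2.2, w.2.1, w.2.2.1, w.1, w.2.2.2.1),
     fun z => (z.2.2.2.2.1, z.2.2.1, z.2.2.2.1, z.2.2.2.2.2, z.1, z.2.1),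
     fun _ => rfl, fun _ => rfl⟩ _ _ (fun _ => rfl)

lemma trace_outer_ampMid' {m n u v : ℕ} (ψ : Fin m × Fin n → ℂ) (φ : Fin u × Fin v → ℂ)
    (P : Matrix (Fin n × Fin u) (Fin n × Fin u) ℂ) :
    Matrix.trace (outer (fun p : (Fin m × Fin n) × Fin u × Fin v => ψ p.1 * φ p.2) * ampMid m v P)
    = ∑ x : Fin n × Fin u, ∑ y : Fin n × Fin u,
        (∑ pm, star (ψ (pm, x.1)) * ψ (pm, y.1)) *
        (∑ pv, star (φ (x.2, pv)) * φ (y.2, pv)) * P x y := by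
  simp only [Matrix.trace, Matrix.mul_apply, Matrix.diag, outer, Matrix.vecMulVec_apply,
    ampMid, Matrix.of_apply, Pi.star_apply, Fintype.sum_prod_type]
  have step : ∀ (pm : Fin m) (pn : Fin n) (pu : Fin u) (pv : Fin v),
      (∑ qm : Fin m, ∑ qn : Fin n, ∑ qu : Fin u, ∑ qv : Fin v,
        ψ (pm, pn) * φ (pu, pv) * star (ψ (qm, qn) * φ (qu, qv)) *
          ((if qm = pm then (1:ℂ) else 0) * P (qn, qu) (pn, pu) * if qv = pv then (1:ℂ) else 0))
      = ∑ qn : Fin n, ∑ qu : Fin u,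
        ψ (pm, pn) * φ (pu, pv) * star (ψ (pm, qn)) * star (φ (qu, pv)) * P (qn, qu) (pn, pu) := by
    intro pm pn pu pv
    rw [Finset.sum_eq_single pm]
    · refine Finset.sum_congr rfl fun qn _ => Finset.sum_congr rfl fun qu _ => ?_
      simp [mul_ite, ite_mul, mul_zero, zero_mul, mul_one, Finset.sum_ite_eq', star_mul']
      ring_nf
      tauto
    · intro b _ hb
      refine Finset.sum_eq_zero fun _ _ => Finset.sum_eq_zero fun _ _ =>
        Finset.sum_eq_zero fun _ _ => ?_
      simp [hb]
    · intro h; exact absurd (Finset.mem_univ pm) h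
  calc
    _ = ∑ pm : Fin m, ∑ pn : Fin n, ∑ pu : Fin u, ∑ pv : Fin v, ∑ qn : Fin n, ∑ qu : Fin u,
        ψ (pm, pn) * φ (pu, pv) * star (ψ (pm, qn)) * star (φ (qu, pv)) * P (qn, qu) (pn, pu) := by
      refine Finset.sum_congr rfl fun pm _ => Finset.sum_congr rfl fun pn _ =>
        Finset.sum_congr rfl fun pu _ => Finset.sum_congr rfl fun pv _ => ?_
      exact step pm pn pu pv
    _ = ∑ qn : Fin n, ∑ qu : Fin u, ∑ pn : Fin n, ∑ pu : Fin u, ∑ pm : Fin m, ∑ pv : Fin v,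
        ψ (pm, pn) * φ (pu, pv) * star (ψ (pm, qn)) * star (φ (qu, pv)) * P (qn, qu) (pn, pu) :=
      regroup' _
    _ = _ := by
      refine Finset.sum_congr rfl fun qn _ => Finset.sum_congr rfl fun qu _ =>
        Finset.sum_congr rfl fun pn _ => Finset.sum_congr rfl fun pu _ => ?_
      rw [Finset.sum_mul_sum, Finset.sum_mul]
      refine Finset.sum_congr rfl fun pm _ => ?_
      rw [Finset.sum_mul]
      refine Finset.sum_congr rfl fun pv _ => ?_
      ring

lemma collapse' {α β ι : Type*} [Fintype α] [Fintype ι] [DecidableEq ι]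
    (lam : ι → ℝ) (a : ι → α → ℂ) (b : ι → β → ℂ)
    (ha : ∀ i i', (∑ p, star (a i p) * a i' p) = if i = i' then (1:ℂ) else 0)
    (x y : β) :
    (∑ pm : α, star (∑ i, (lam i : ℂ) * a i pm * b i x) * (∑ i, (lam i : ℂ) * a i pm * b i y))
    = ∑ i, ((lam i : ℂ))^2 * (star (b i x) * b i y) := by
  have h1 : ∀ pm : α, star (∑ i, (lam i:ℂ) * a i pm * b i x) * (∑ i, (lam i:ℂ) * a i pm * b i y)
      = ∑ i, ∑ i', ((lam i:ℂ) * star (b i x) * (lam i':ℂ) * b i' y) *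
          (star (a i pm) * a i' pm) := by
    intro pm
    rw [star_sum, Finset.sum_mul_sum]
    refine Finset.sum_congr rfl fun i _ => Finset.sum_congr rfl fun i' _ => ?_
    simp only [star_mul', Complex.star_def, Complex.conj_ofReal]
    ring
  rw [Finset.sum_congr rfl fun pm _ => h1 pm, Finset.sum_comm]
  refine Finset.sum_congr rfl fun i _ => ?_
  rw [Finset.sum_comm]
  have h2 : ∀ i' : ι, (∑ pm : α, ((lam i:ℂ) * star (b i x) * (lam i':ℂ) * b i' y) *
      (star (a i pm) * a i' pm))
      = ((lam i:ℂ) * star (b i x) * (lam i':ℂ) * b i' y) * if i = i' then (1:ℂ) else 0 := by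
    intro i'
    rw [← Finset.mul_sum, ha]
  rw [Finset.sum_congr rfl fun i' _ => h2 i']
  simp [Finset.sum_ite_eq]
  ring

end Aux

/-- For pure inputs and any rank-one von Neumann measurement on the middle
factors, `tr(ρ · Π^{BC}(ρ)) = Σ_h ⟨u_h, σ u_h⟩²` where
`σ = Σ_{i,j} λ_i² μ_j² (b_i⊗c_j)(b_i⊗c_j)†`. -/
theorem stmt1 {m n u v : ℕ} {ι κ : Type*} [Fintype ι] [Fintype κ]
    [DecidableEq ι] [DecidableEq κ]
    (ψ : Fin m × Fin n → ℂ) (φ : Fin u × Fin v → ℂ)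
    (lam : ι → ℝ) (mu : κ → ℝ)
    (a : ι → Fin m → ℂ) (b : ι → Fin n → ℂ)
    (c : κ → Fin u → ℂ) (d : κ → Fin v → ℂ)
    (ha : ∀ i i', cInner (a i) (a i') = if i = i' then (1 : ℂ) else 0)
    (hb : ∀ i i', cInner (b i) (b i') = if i = i' then (1 : ℂ) else 0)
    (hc : ∀ j j', cInner (c j) (c j') = if j = j' then (1 : ℂ) else 0)
    (hd : ∀ j j', cInner (d j) (d j') = if j = j' then (1 : ℂ) else 0)
    (hlam : ∀ i, 0 ≤ lam i) (hmu : ∀ j, 0 ≤ mu j)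
    (hlam1 : ∑ i, lam i ^ 2 = 1) (hmu1 : ∑ j, mu j ^ 2 = 1)
    (hψ : ψ = fun p => ∑ i, (lam i : ℂ) * a i p.1 * b i p.2)
    (hφ : φ = fun p => ∑ j, (mu j : ℂ) * c j p.1 * d j p.2)
    (ρ : Matrix ((Fin m × Fin n) × Fin u × Fin v) ((Fin m × Fin n) × Fin u × Fin v) ℂ)
    (hρ : ρ = outer ψ ⊗ₖ outer φ)
    (σ : Matrix (Fin n × Fin u) (Fin n × Fin u) ℂ)
    (hσ : σ = ∑ i, ∑ j, ((lam i ^ 2 * mu j ^ 2 : ℝ) : ℂ) •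
        outer (fun p : Fin n × Fin u => b i p.1 * c j p.2))
    (w : (Fin n × Fin u) → (Fin n × Fin u) → ℂ) (hw : IsVNM w) :
    Matrix.trace (ρ * pinchBC w ρ) = ∑ h, (cInner (w h) (σ *ᵥ w h)) ^ 2 := by
  subst hρ
  rw [outer_kron']
  set Ψ : (Fin m × Fin n) × Fin u × Fin v → ℂ := fun p => ψ p.1 * φ p.2 with hΨ
  rw [pinchBC, Finset.mul_sum, Matrix.trace_sum]
  refine Finset.sum_congr rfl fun h _ => ?_
  rw [show ampMid m v (projOf w h) * outer Ψ * ampMid m v (projOf w h)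
      = ampMid m v (projOf w h) * outer Ψ * ampMid m v (projOf w h) from rfl, trace_sq']
  congr 1
  rw [hΨ, trace_outer_ampMid']
  -- collapse the A and D registers using orthonormality
  have hcolψ : ∀ x y : Fin n, (∑ pm, star (ψ (pm, x)) * ψ (pm, y))
      = ∑ i, ((lam i : ℂ))^2 * (star (b i x) * b i y) := by
    intro x y
    have hψ' : ∀ pm t, ψ (pm, t) = ∑ i, (lam i : ℂ) * a i pm * b i t := by
      intro pm t; rw [hψ]
    simp only [hψ']
    exact collapse' lam a b (fun i i' => by simpa [cInner] using ha i i') x y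
  have hcolφ : ∀ x y : Fin u, (∑ pv, star (φ (x, pv)) * φ (y, pv))
      = ∑ j, ((mu j : ℂ))^2 * (star (c j x) * c j y) := by
    intro x y
    have hφ' : ∀ t pv, φ (t, pv) = ∑ j, (mu j : ℂ) * d j pv * c j t := by
      intro t pv; rw [hφ]; exact Finset.sum_congr rfl fun j _ => by ring
    simp only [hφ']
    exact collapse' mu d c (fun j j' => by simpa [cInner] using hd j j') x y
  simp only [hcolψ, hcolφ]
  -- expand the right-hand side
  rw [show (cInner (w h) (σ *ᵥ w h))
      = ∑ x : Fin n × Fin u, ∑ y : Fin n × Fin u, star (w h x) * (σ x y * w h y) by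
    simp [cInner, Matrix.mulVec, dotProduct, Finset.mul_sum]]
  rw [Finset.sum_comm]
  refine Finset.sum_congr rfl fun x _ => Finset.sum_congr rfl fun y _ => ?_
  subst hσ
  simp only [Matrix.sum_apply, Matrix.smul_apply, outer, Matrix.vecMulVec_apply,
    Pi.star_apply, smul_eq_mul, projOf, Complex.ofReal_mul, Complex.ofReal_pow]
  rw [Finset.sum_mul_sum, Finset.sum_mul, Finset.sum_mul]
  rw [Finset.mul_sum]
  refine Finset.sum_congr rfl fun i _ => ?_
  rw [Finset.sum_mul, Finset.sum_mul, Finset.mul_sum]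
  refine Finset.sum_congr rfl fun j _ => ?_
  simp only [star_mul']
  ring
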